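/- Let V ⊂ ℝ^n be a compact measurable set, let φ : ℝ^n → ℝ be continuous, and let γ ∈ ℝ and σ > 0. Define F : ℝ^n → ℝ by F(p) = ∫_V ( φ(q) − γ · exp(−‖p − q‖²/σ²) )² dq. Then F is differentiable at every p ∈ ℝ^n, and its gradient is ∇F(p) = (4γ/σ²) ∫_V exp(−‖p − q‖²/σ²) · ( φ(q) − γ · exp(−‖p − q‖²/σ²) ) · (p − q) dq. -/

import Mathlib

set_option synthInstance.maxHeartbeats 1000000
set_option maxHeartbeats 1000000
open Metric


open MeasureTheory

lemma key_deriv {n : ℕ} (φ : EuclideanSpace ℝ (Fin n) → ℝ) (γ σ : ℝ)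
    (q p : EuclideanSpace ℝ (Fin n)) :
    HasFDerivAt (fun p' : EuclideanSpace ℝ (Fin n) =>
        (φ q - γ * Real.exp (-‖p' - q‖ ^ 2 / σ ^ 2)) ^ 2)
      (((4 * γ / σ ^ 2) * (Real.exp (-‖p - q‖ ^ 2 / σ ^ 2) *
          (φ q - γ * Real.exp (-‖p - q‖ ^ 2 / σ ^ 2)))) • innerSL ℝ (p - q)) p := by
  have h1 : HasFDerivAt (fun p' : EuclideanSpace ℝ (Fin n) => p' - q)
      (ContinuousLinearMap.id ℝ _) p := (hasFDerivAt_id p).sub_const q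
  have h2 := h1.norm_sq
  have h6 := (((h2.neg.mul_const ((σ ^ 2)⁻¹)).exp.const_mul γ).const_sub (φ q))
  have h7 := h6.mul h6
  refine HasFDerivAt.congr_fderiv (HasFDerivAt.congr_of_eventuallyEq h7 (Filter.Eventually.of_forall fun x => ?_)) ?_
  · beta_reduce; rw [pow_two, div_eq_mul_inv]; rfl
  · ext v
    simp [ContinuousLinearMap.smul_apply, smul_smul, real_inner_comm, div_eq_mul_inv]
    ring


/-- For a compact set `V ⊆ ℝⁿ`, a continuous density `φ`,
`γ ∈ ℝ` and `σ > 0`, the function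
`F p = ∫_V (φ q - γ · exp (-‖p - q‖²/σ²))² dq` is differentiable everywhere
and its gradient is
`∇F p = (4γ/σ²) ∫_V exp (-‖p - q‖²/σ²) (φ q - γ · exp (-‖p - q‖²/σ²)) (p - q) dq`. -/
theorem gradient_l2_cell_cost
    {n : ℕ} (V : Set (EuclideanSpace ℝ (Fin n)))
    (hVcompact : IsCompact V) (hVmeas : MeasurableSet V)
    (φ : EuclideanSpace ℝ (Fin n) → ℝ) (hφcont : Continuous φ)
    (γ σ : ℝ) (hσ : 0 < σ) :
    ∀ p : EuclideanSpace ℝ (Fin n),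
      DifferentiableAt ℝ
        (fun p' : EuclideanSpace ℝ (Fin n) =>
          ∫ q in V, (φ q - γ * Real.exp (-‖p' - q‖ ^ 2 / σ ^ 2)) ^ 2) p ∧
      gradient
        (fun p' : EuclideanSpace ℝ (Fin n) =>
          ∫ q in V, (φ q - γ * Real.exp (-‖p' - q‖ ^ 2 / σ ^ 2)) ^ 2) p =
        (4 * γ / σ ^ 2) •
          ∫ q in V, (Real.exp (-‖p - q‖ ^ 2 / σ ^ 2) *
            (φ q - γ * Real.exp (-‖p - q‖ ^ 2 / σ ^ 2))) • (p - q) := by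
  intro p
  -- notation
  set e : EuclideanSpace ℝ (Fin n) → EuclideanSpace ℝ (Fin n) → ℝ := fun p' q => Real.exp (-‖p' - q‖ ^ 2 / σ ^ 2) with he
  set c : EuclideanSpace ℝ (Fin n) → EuclideanSpace ℝ (Fin n) → ℝ := fun p' q => (4 * γ / σ ^ 2) * (e p' q * (φ q - γ * e p' q)) with hc
  set F' : EuclideanSpace ℝ (Fin n) → EuclideanSpace ℝ (Fin n) → (EuclideanSpace ℝ (Fin n) →L[ℝ] ℝ) := fun p' q => c p' q • innerSL ℝ (p' - q) with hF'
  -- continuity facts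
  have econt : Continuous fun pq : EuclideanSpace ℝ (Fin n) × EuclideanSpace ℝ (Fin n) => e pq.1 pq.2 := by
    apply Real.continuous_exp.comp
    exact ((continuous_fst.sub continuous_snd).norm.pow 2).neg.div_const _
  have ccont : Continuous fun pq : EuclideanSpace ℝ (Fin n) × EuclideanSpace ℝ (Fin n) => c pq.1 pq.2 := by
    exact continuous_const.mul (econt.mul ((hφcont.comp continuous_snd).sub
      (continuous_const.mul econt)))
  -- bounds
  obtain ⟨R, hR⟩ := hVcompact.isBounded.exists_norm_le
  obtain ⟨Cφ, hCφ⟩ : ∃ C, ∀ x ∈ V, ‖φ x‖ ≤ C := hVcompact.exists_bound_of_continuousOn hφcont.continuousOn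
  have hCφ0 : ∀ x ∈ V, |φ x| ≤ max Cφ 0 := fun x hx => le_trans (hCφ x hx) (le_max_left _ _)
  have hR0 : (0:ℝ) ≤ max R 0 := le_max_right _ _
  have heb : ∀ p' q : EuclideanSpace ℝ (Fin n), |e p' q| ≤ 1 := by
    intro p' q
    rw [abs_of_pos (Real.exp_pos _)]
    apply Real.exp_le_one_iff.mpr
    apply div_nonpos_of_nonpos_of_nonneg (neg_nonpos.mpr (by positivity)) (by positivity)
  set B : ℝ := |4 * γ / σ ^ 2| * (max Cφ 0 + |γ|) * (1 + ‖p‖ + max R 0) with hB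
  have hbound : ∀ q ∈ V, ∀ x ∈ ball p 1, ‖F' x q‖ ≤ B := by
    intro q hq x hx
    have h1 : ‖F' x q‖ = |c x q| * ‖x - q‖ := by
      calc ‖F' x q‖ = ‖c x q‖ * ‖innerSL ℝ (x - q)‖ := norm_smul (c x q) (innerSL ℝ (x - q))
        _ = |c x q| * ‖x - q‖ := by rw [innerSL_apply_norm, Real.norm_eq_abs]
    rw [h1, hB]
    have hcb : |c x q| ≤ |4 * γ / σ ^ 2| * (max Cφ 0 + |γ|) := by
      have : |c x q| = |4 * γ / σ ^ 2| * |e x q * (φ q - γ * e x q)| := by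
        rw [hc, abs_mul]
      rw [this]
      have h2 : |e x q * (φ q - γ * e x q)| ≤ max Cφ 0 + |γ| := by
        calc |e x q * (φ q - γ * e x q)|
            = |e x q| * |φ q - γ * e x q| := abs_mul _ _
          _ ≤ 1 * (|φ q| + |γ * e x q|) :=
              mul_le_mul (heb x q) (abs_sub _ _) (abs_nonneg _) one_pos.le
          _ = |φ q| + |γ * e x q| := one_mul _
          _ ≤ max Cφ 0 + |γ| := by
              apply add_le_add (hCφ0 q hq)
              rw [abs_mul]
              calc |γ| * |e x q| ≤ |γ| * 1 :=
                    mul_le_mul_of_nonneg_left (heb x q) (abs_nonneg γ)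
                _ = |γ| := mul_one _
      exact mul_le_mul_of_nonneg_left h2 (abs_nonneg _)
    have hxq : ‖x - q‖ ≤ 1 + ‖p‖ + max R 0 := by
      calc ‖x - q‖ ≤ ‖x - p‖ + ‖p‖ + ‖q‖ := by
            have := norm_sub_le (x - p) (q - p)
            have h2 : x - q = (x - p) - (q - p) := by abel
            rw [h2]
            calc ‖(x - p) - (q - p)‖ ≤ ‖x - p‖ + ‖q - p‖ := norm_sub_le _ _
              _ ≤ ‖x - p‖ + (‖q‖ + ‖p‖) := by gcongr; exact norm_sub_le _ _
              _ = ‖x - p‖ + ‖p‖ + ‖q‖ := by ring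
        _ ≤ 1 + ‖p‖ + max R 0 :=
            add_le_add (add_le_add (le_of_lt (by simpa [dist_eq_norm] using hx)) le_rfl)
              (le_trans (hR q hq) (le_max_left _ _))
    exact mul_le_mul hcb hxq (norm_nonneg _)
      (mul_nonneg (abs_nonneg _) (add_nonneg (le_max_right _ _) (abs_nonneg _)))
  -- measure facts
  have hFcont : ∀ x : EuclideanSpace ℝ (Fin n), Continuous fun q => (φ q - γ * e x q) ^ 2 := by
    intro x
    exact ((hφcont.sub (continuous_const.mul
      (econt.comp (continuous_const.prodMk continuous_id)))).pow 2)
  have hFint : ∀ x : EuclideanSpace ℝ (Fin n), IntegrableOn (fun q => (φ q - γ * e x q) ^ 2) V := by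
    intro x
    exact (hFcont x).continuousOn.integrableOn_compact hVcompact
  have hF'cont : Continuous fun q => F' p q := by
    rw [hF']
    exact (ccont.comp (continuous_const.prodMk continuous_id)).smul
      ((innerSL ℝ).continuous.comp (continuous_const.sub continuous_id))
  -- main differentiation under integral
  have hmain : HasFDerivAt (fun p' : EuclideanSpace ℝ (Fin n) => ∫ q in V, (φ q - γ * e p' q) ^ 2)
      (∫ q in V, F' p q) p := by
    apply hasFDerivAt_integral_of_dominated_of_fderiv_le (bound := fun _ => B)
      (ball_mem_nhds p one_pos)
    · filter_upwards with x using (hFcont x).aestronglyMeasurable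
    · exact hFint p
    · exact hF'cont.aestronglyMeasurable
    · rw [ae_restrict_iff' hVmeas]
      filter_upwards with q hq x hx using hbound q hq x hx
    · exact (integrableOn_const_iff (by simp)).mpr (Or.inr hVcompact.measure_lt_top)
    · rw [ae_restrict_iff' hVmeas]
      filter_upwards with q _ x _
      exact key_deriv φ γ σ q x
  -- identify ∫ F' with inner product form
  have hgint : IntegrableOn (fun q => c p q • (p - q)) V := by
    apply ContinuousOn.integrableOn_compact hVcompact
    exact ((ccont.comp (continuous_const.prodMk continuous_id)).smul
      (continuous_const.sub continuous_id)).continuousOn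
  have hinteq : (∫ q in V, F' p q) = innerSL ℝ (∫ q in V, c p q • (p - q)) := by
    rw [← ContinuousLinearMap.integral_comp_comm (innerSL ℝ) hgint]
    congr 1
    funext q
    exact ((innerSL ℝ).map_smul (c p q) (p - q)).symm
  have hgrad : HasGradientAt (fun p' : EuclideanSpace ℝ (Fin n) => ∫ q in V, (φ q - γ * e p' q) ^ 2)
      (∫ q in V, c p q • (p - q)) p := by
    rw [hasGradientAt_iff_hasFDerivAt]
    have : (InnerProductSpace.toDual ℝ (EuclideanSpace ℝ (Fin n))) (∫ q in V, c p q • (p - q))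
        = innerSL ℝ (∫ q in V, c p q • (p - q)) := by
      ext y; simp [InnerProductSpace.toDual_apply_apply]
    rw [this, ← hinteq]
    exact hmain
  constructor
  · exact hmain.differentiableAt
  · rw [hgrad.gradient]
    rw [show (fun q => c p q • (p - q)) =
        fun q => (4 * γ / σ ^ 2) • ((e p q * (φ q - γ * e p q)) • (p - q)) by
      funext q; rw [hc, mul_smul]]
    rw [integral_smul]
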